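/- Let V be the upper probability on a measurable space (Ω,𝓕) generated by a nonempty set 𝒫 of finitely additive probabilities, assume V is continuous, and let θ : Ω → Ω be a measurable transformation preserving V. Then the following are all equivalent: (i) θ is ergodic with respect to V; (ii) for every B ∈ 𝓕 with V(θ⁻¹B △ B) = 0, either V(B) = 0 or V(Bᶜ) = 0; (iii) for every A ∈ 𝓕 with V(A) > 0, V((⋃_{n=1}^∞ θ^{−n}A)ᶜ) = 0; (iv) for all A, B ∈ 𝓕 with V(A) > 0 and V(B) > 0 there exists n ∈ ℕ with V(θ^{−n}A ∩ B) > 0. -/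

import Mathlib

open MeasureTheory Filter Topology Set

def IsFinAddProb {Ω : Type*} [MeasurableSpace Ω] (P : Set Ω → ℝ) : Prop :=
  P ∅ = 0 ∧ P Set.univ = 1 ∧
    (∀ A : Set Ω, MeasurableSet A → 0 ≤ P A ∧ P A ≤ 1) ∧
    (∀ A B : Set Ω, MeasurableSet A → MeasurableSet B → Disjoint A B →
      P (A ∪ B) = P A + P B)

def IsCapacity {Ω : Type*} [MeasurableSpace Ω] (μ : Set Ω → ℝ) : Prop :=
  μ ∅ = 0 ∧ μ Set.univ = 1 ∧
    ∀ A B : Set Ω, MeasurableSet A → MeasurableSet B → A ⊆ B → μ A ≤ μ B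

def ContBelow {Ω : Type*} [MeasurableSpace Ω] (μ : Set Ω → ℝ) : Prop :=
  ∀ A : ℕ → Set Ω, (∀ n, MeasurableSet (A n)) → Monotone A →
    Filter.Tendsto (fun n => μ (A n)) Filter.atTop (nhds (μ (⋃ n, A n)))

def ContAbove {Ω : Type*} [MeasurableSpace Ω] (μ : Set Ω → ℝ) : Prop :=
  ∀ A : ℕ → Set Ω, (∀ n, MeasurableSet (A n)) → Antitone A →
    Filter.Tendsto (fun n => μ (A n)) Filter.atTop (nhds (μ (⋂ n, A n)))

def ContAtEmpty {Ω : Type*} [MeasurableSpace Ω] (μ : Set Ω → ℝ) : Prop :=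
  ∀ A : ℕ → Set Ω, (∀ n, MeasurableSet (A n)) → Antitone A → (⋂ n, A n) = ∅ →
    Filter.Tendsto (fun n => μ (A n)) Filter.atTop (nhds 0)

def ContAtUniv {Ω : Type*} [MeasurableSpace Ω] (μ : Set Ω → ℝ) : Prop :=
  ∀ A : ℕ → Set Ω, (∀ n, MeasurableSet (A n)) → Monotone A → (⋃ n, A n) = Set.univ →
    Filter.Tendsto (fun n => μ (A n)) Filter.atTop (nhds 1)

def conjCap {Ω : Type*} (μ : Set Ω → ℝ) (A : Set Ω) : ℝ := 1 - μ Aᶜ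

noncomputable def choquet {Ω : Type*} (μ : Set Ω → ℝ) (ξ : Ω → ℝ) : ℝ :=
  (∫ t in Set.Ioi (0:ℝ), μ {ω | ξ ω ≥ t}) +
    (∫ t in Set.Iio (0:ℝ), (μ {ω | ξ ω ≥ t} - 1))

noncomputable def choquetE {Ω : Type*} (μ : Set Ω → ℝ) (ξ : Ω → EReal) : ℝ :=
  (∫ t in Set.Ioi (0:ℝ), μ {ω | (t : EReal) ≤ ξ ω}) +
    (∫ t in Set.Iio (0:ℝ), (μ {ω | (t : EReal) ≤ ξ ω} - 1))

def UpperProbOf {Ω : Type*} [MeasurableSpace Ω] (𝒮 : Set (Set Ω → ℝ)) (V : Set Ω → ℝ) : Prop :=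
  ∀ A : Set Ω, MeasurableSet A → V A = sSup ((fun P => P A) '' 𝒮)

def LowerProbOf {Ω : Type*} [MeasurableSpace Ω] (𝒮 : Set (Set Ω → ℝ)) (v : Set Ω → ℝ) : Prop :=
  ∀ A : Set Ω, MeasurableSet A → v A = sInf ((fun P => P A) '' 𝒮)

def ErgodicCap {Ω : Type*} [MeasurableSpace Ω] (μ : Set Ω → ℝ) (θ : Ω → Ω) : Prop :=
  ∀ B : Set Ω, MeasurableSet B → θ ⁻¹' B = B →
    (μ B = 0 ∨ μ B = 1) ∧ (μ B = 0 ∨ μ Bᶜ = 0)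

def PreservesCap {Ω : Type*} [MeasurableSpace Ω] (μ : Set Ω → ℝ) (θ : Ω → Ω) : Prop :=
  ∀ A : Set Ω, MeasurableSet A → μ (θ ⁻¹' A) = μ A

def IndepSigmaWrt {Ω : Type*} (μ : Set Ω → ℝ) (m₁ m₂ : MeasurableSpace Ω) : Prop :=
  ∀ A B : Set Ω, MeasurableSet[m₁] A → MeasurableSet[m₂] B → μ (A ∩ B) = μ A * μ B


set_option linter.unusedSectionVars false

section Helpers

variable {Ω : Type*} [MeasurableSpace Ω]

lemma measSD {A B : Set Ω} (hA : MeasurableSet A) (hB : MeasurableSet B) :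
    MeasurableSet (symmDiff A B) := hA.symmDiff hB

lemma prob_nonneg {P : Set Ω → ℝ} (h : IsFinAddProb P) {A : Set Ω} (hA : MeasurableSet A) :
    0 ≤ P A := (h.2.2.1 A hA).1

lemma prob_le_one {P : Set Ω → ℝ} (h : IsFinAddProb P) {A : Set Ω} (hA : MeasurableSet A) :
    P A ≤ 1 := (h.2.2.1 A hA).2

lemma prob_mono {P : Set Ω → ℝ} (h : IsFinAddProb P) {A B : Set Ω} (hA : MeasurableSet A)
    (hB : MeasurableSet B) (hAB : A ⊆ B) : P A ≤ P B := by
  have h1 := h.2.2.2 A (B \ A) hA (hB.diff hA) disjoint_sdiff_right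
  rw [Set.union_diff_cancel hAB] at h1
  have h0 := prob_nonneg h (hB.diff hA)
  linarith

lemma prob_union_le {P : Set Ω → ℝ} (h : IsFinAddProb P) {A B : Set Ω} (hA : MeasurableSet A)
    (hB : MeasurableSet B) : P (A ∪ B) ≤ P A + P B := by
  have heq := h.2.2.2 A (B \ A) hA (hB.diff hA) disjoint_sdiff_right
  rw [Set.union_diff_self] at heq
  have h2 := prob_mono h (hB.diff hA) hB Set.diff_subset
  linarith

variable {𝒮 : Set (Set Ω → ℝ)} {V : Set Ω → ℝ}

lemma V_bdd (hP : ∀ P ∈ 𝒮, IsFinAddProb P) {A : Set Ω} (hA : MeasurableSet A) :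
    BddAbove ((fun P => P A) '' 𝒮) := by
  refine ⟨1, ?_⟩
  rintro x ⟨P, hPm, rfl⟩
  exact prob_le_one (hP P hPm) hA

lemma V_ge_P (hP : ∀ P ∈ 𝒮, IsFinAddProb P) (hV : UpperProbOf 𝒮 V)
    {A : Set Ω} (hA : MeasurableSet A) {P : Set Ω → ℝ} (hPm : P ∈ 𝒮) : P A ≤ V A := by
  rw [hV A hA]; exact le_csSup (V_bdd hP hA) ⟨P, hPm, rfl⟩

lemma V_nonneg (h𝒮 : 𝒮.Nonempty) (hP : ∀ P ∈ 𝒮, IsFinAddProb P) (hV : UpperProbOf 𝒮 V)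
    {A : Set Ω} (hA : MeasurableSet A) : 0 ≤ V A := by
  obtain ⟨P, hPm⟩ := h𝒮
  exact le_trans (prob_nonneg (hP P hPm) hA) (V_ge_P hP hV hA hPm)

lemma V_le_one (hP : ∀ P ∈ 𝒮, IsFinAddProb P) (hV : UpperProbOf 𝒮 V)
    {A : Set Ω} (hA : MeasurableSet A) : V A ≤ 1 := by
  rw [hV A hA]
  refine Real.sSup_le ?_ zero_le_one
  rintro x ⟨P, hPm, rfl⟩
  exact prob_le_one (hP P hPm) hA

lemma V_empty (hP : ∀ P ∈ 𝒮, IsFinAddProb P) (hV : UpperProbOf 𝒮 V) : V ∅ = 0 := by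
  rw [hV ∅ MeasurableSet.empty]
  apply le_antisymm
  · refine Real.sSup_le ?_ le_rfl
    rintro x ⟨P, hPm, rfl⟩
    exact le_of_eq (hP P hPm).1
  · refine Real.sSup_nonneg ?_
    rintro x ⟨P, hPm, rfl⟩
    exact ge_of_eq (hP P hPm).1

lemma V_mono (h𝒮 : 𝒮.Nonempty) (hP : ∀ P ∈ 𝒮, IsFinAddProb P) (hV : UpperProbOf 𝒮 V)
    {A B : Set Ω} (hA : MeasurableSet A) (hB : MeasurableSet B) (hAB : A ⊆ B) :
    V A ≤ V B := by
  rw [hV A hA]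
  refine Real.sSup_le ?_ (V_nonneg h𝒮 hP hV hB)
  rintro x ⟨P, hPm, rfl⟩
  exact le_trans (prob_mono (hP P hPm) hA hB hAB) (V_ge_P hP hV hB hPm)

lemma V_union_le (h𝒮 : 𝒮.Nonempty) (hP : ∀ P ∈ 𝒮, IsFinAddProb P) (hV : UpperProbOf 𝒮 V)
    {A B : Set Ω} (hA : MeasurableSet A) (hB : MeasurableSet B) :
    V (A ∪ B) ≤ V A + V B := by
  rw [hV (A ∪ B) (hA.union hB)]
  refine Real.sSup_le ?_ (add_nonneg (V_nonneg h𝒮 hP hV hA) (V_nonneg h𝒮 hP hV hB))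
  rintro x ⟨P, hPm, rfl⟩
  exact le_trans (prob_union_le (hP P hPm) hA hB)
    (add_le_add (V_ge_P hP hV hA hPm) (V_ge_P hP hV hB hPm))

lemma V_compl_sum (h𝒮 : 𝒮.Nonempty) (hP : ∀ P ∈ 𝒮, IsFinAddProb P) (hV : UpperProbOf 𝒮 V)
    {A : Set Ω} (hA : MeasurableSet A) : 1 ≤ V A + V Aᶜ := by
  obtain ⟨P, hPm⟩ := h𝒮
  have h1 := (hP P hPm).2.2.2 A Aᶜ hA hA.compl disjoint_compl_right
  rw [Set.union_compl_self, (hP P hPm).2.1] at h1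
  have h2 := V_ge_P hP hV hA hPm
  have h3 := V_ge_P hP hV hA.compl hPm
  linarith

lemma V_iter {θ : Ω → Ω} (hθ : Measurable θ) (hpres : PreservesCap V θ)
    {A : Set Ω} (hA : MeasurableSet A) (n : ℕ) : V (θ^[n] ⁻¹' A) = V A := by
  induction n with
  | zero => simp
  | succ n ih =>
    rw [Function.iterate_succ, Set.preimage_comp, hpres _ ((hθ.iterate n) hA), ih]

lemma acc_succ {N : ℕ → Set Ω} (n : ℕ) :
    Set.accumulate N (n + 1) = Set.accumulate N n ∪ N (n + 1) := by
  ext x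
  simp only [Set.mem_accumulate, Set.mem_union, Nat.le_add_one_iff]
  constructor
  · rintro ⟨y, hy | rfl, hx⟩
    · exact Or.inl ⟨y, hy, hx⟩
    · exact Or.inr hx
  · rintro (⟨y, hy, hx⟩ | hx)
    · exact ⟨y, Or.inl hy, hx⟩
    · exact ⟨n + 1, Or.inr rfl, hx⟩

lemma V_iUnion_null (h𝒮 : 𝒮.Nonempty) (hP : ∀ P ∈ 𝒮, IsFinAddProb P) (hV : UpperProbOf 𝒮 V)
    (hVb : ContBelow V) {N : ℕ → Set Ω} (hN : ∀ n, MeasurableSet (N n))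
    (h0 : ∀ n, V (N n) = 0) : V (⋃ n, N n) = 0 := by
  have hacc_meas : ∀ n, MeasurableSet (Set.accumulate N n) := by
    intro n
    rw [Set.accumulate_def]
    exact MeasurableSet.biUnion (Set.to_countable _) (fun k _ => hN k)
  have hacc0 : ∀ n, V (Set.accumulate N n) = 0 := by
    intro n
    induction n with
    | zero =>
      have : Set.accumulate N 0 = N 0 := by
        apply Set.Subset.antisymm
        · intro x hx
          obtain ⟨y, hy, hx⟩ := Set.mem_accumulate.1 hx
          rwa [Nat.le_zero.1 hy] at hx
        · exact Set.subset_accumulate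
      rw [this]; exact h0 0
    | succ n ih =>
      have hle := V_union_le h𝒮 hP hV (hacc_meas n) (hN (n + 1))
      have hge := V_nonneg h𝒮 hP hV (hacc_meas (n + 1))
      rw [acc_succ n] at hge ⊢
      rw [ih, h0 (n + 1)] at hle
      linarith
  have ht := hVb (Set.accumulate N) hacc_meas Set.monotone_accumulate
  rw [Set.iUnion_accumulate] at ht
  simp only [hacc0] at ht
  exact (tendsto_nhds_unique tendsto_const_nhds ht).symm

lemma V_symmDiff_le (h𝒮 : 𝒮.Nonempty) (hP : ∀ P ∈ 𝒮, IsFinAddProb P) (hV : UpperProbOf 𝒮 V)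
    {A B : Set Ω} (hA : MeasurableSet A) (hB : MeasurableSet B) :
    V A ≤ V B + V (symmDiff A B) := by
  have hsub : A ⊆ B ∪ symmDiff A B := by
    intro x hx
    by_cases hxB : x ∈ B
    · exact Or.inl hxB
    · exact Or.inr (Set.mem_symmDiff.2 (Or.inl ⟨hx, hxB⟩))
  exact le_trans (V_mono h𝒮 hP hV hA (hB.union (measSD hA hB)) hsub)
    (V_union_le h𝒮 hP hV hB (measSD hA hB))

lemma iter_symmDiff_null (h𝒮 : 𝒮.Nonempty) (hP : ∀ P ∈ 𝒮, IsFinAddProb P)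
    (hV : UpperProbOf 𝒮 V) {θ : Ω → Ω} (hθ : Measurable θ) (hpres : PreservesCap V θ)
    {B : Set Ω} (hB : MeasurableSet B) (h0 : V (symmDiff (θ ⁻¹' B) B) = 0) (k : ℕ) :
    V (symmDiff (θ^[k] ⁻¹' B) B) = 0 := by
  induction k with
  | zero => simpa using V_empty hP hV
  | succ k ih =>
    have hXk : MeasurableSet (θ^[k] ⁻¹' B) := (hθ.iterate k) hB
    have hXk1 : MeasurableSet (θ^[k + 1] ⁻¹' B) := (hθ.iterate (k + 1)) hB
    have hkey : θ^[k + 1] ⁻¹' B = θ^[k] ⁻¹' (θ ⁻¹' B) := by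
      rw [Function.iterate_succ', Set.preimage_comp]
    have hmid : V (symmDiff (θ^[k + 1] ⁻¹' B) (θ^[k] ⁻¹' B)) = 0 := by
      rw [hkey, ← Set.preimage_symmDiff]
      rw [V_iter hθ hpres (measSD (hθ hB) hB) k]
      exact h0
    have htri : symmDiff (θ^[k + 1] ⁻¹' B) B ⊆
        symmDiff (θ^[k + 1] ⁻¹' B) (θ^[k] ⁻¹' B) ∪ symmDiff (θ^[k] ⁻¹' B) B :=
      symmDiff_triangle _ _ _
    have h1 := V_mono h𝒮 hP hV (measSD hXk1 hB)
      ((measSD hXk1 hXk).union (measSD hXk hB)) htri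
    have h2 := V_union_le h𝒮 hP hV (measSD hXk1 hXk) (measSD hXk hB)
    have h3 := V_nonneg h𝒮 hP hV (measSD hXk1 hB)
    rw [hmid, ih] at h2
    linarith

end Helpers

theorem stmt13 {Ω : Type*} [MeasurableSpace Ω]
    (𝒮 : Set (Set Ω → ℝ)) (h𝒮 : 𝒮.Nonempty) (hP : ∀ P ∈ 𝒮, IsFinAddProb P)
    (V : Set Ω → ℝ) (hV : UpperProbOf 𝒮 V) (hVb : ContBelow V) (hVa : ContAbove V)
    (θ : Ω → Ω) (hθ : Measurable θ) (hpres : PreservesCap V θ) :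
    (ErgodicCap V θ ↔
      ∀ B : Set Ω, MeasurableSet B → V (symmDiff (θ ⁻¹' B) B) = 0 →
        (V B = 0 ∨ V Bᶜ = 0)) ∧
    ((∀ B : Set Ω, MeasurableSet B → V (symmDiff (θ ⁻¹' B) B) = 0 →
        (V B = 0 ∨ V Bᶜ = 0)) ↔
      (∀ A : Set Ω, MeasurableSet A → 0 < V A →
        V ((⋃ n : ℕ, θ^[n + 1] ⁻¹' A)ᶜ) = 0)) ∧
    ((∀ A : Set Ω, MeasurableSet A → 0 < V A →
        V ((⋃ n : ℕ, θ^[n + 1] ⁻¹' A)ᶜ) = 0) ↔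
      (∀ A B : Set Ω, MeasurableSet A → MeasurableSet B → 0 < V A → 0 < V B →
        ∃ n : ℕ, 0 < V (θ^[n + 1] ⁻¹' A ∩ B))) := by
  have i21 : (∀ B : Set Ω, MeasurableSet B → V (symmDiff (θ ⁻¹' B) B) = 0 →
      (V B = 0 ∨ V Bᶜ = 0)) → ErgodicCap V θ := by
    intro h2 B hB hinv
    have hres := h2 B hB (by rw [hinv, symmDiff_self, Set.bot_eq_empty]; exact V_empty hP hV)
    refine ⟨?_, hres⟩
    rcases hres with h | h
    · exact Or.inl h
    · right
      have h1 := V_le_one hP hV hB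
      have h2' := V_compl_sum h𝒮 hP hV hB
      linarith
  have i12 : ErgodicCap V θ → (∀ B : Set Ω, MeasurableSet B →
      V (symmDiff (θ ⁻¹' B) B) = 0 → (V B = 0 ∨ V Bᶜ = 0)) := by
    intro h1 B hB h0
    have hNm : ∀ k : ℕ, MeasurableSet (symmDiff (θ^[k] ⁻¹' B) B) :=
      fun k => measSD ((hθ.iterate k) hB) hB
    have hN0 : V (⋃ k, symmDiff (θ^[k] ⁻¹' B) B) = 0 :=
      V_iUnion_null h𝒮 hP hV hVb hNm (iter_symmDiff_null h𝒮 hP hV hθ hpres hB h0)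
    have hCm : MeasurableSet (⋂ n, ⋃ k, θ^[n + k] ⁻¹' B) :=
      MeasurableSet.iInter fun n => MeasurableSet.iUnion fun k => (hθ.iterate (n + k)) hB
    have hCinv : θ ⁻¹' (⋂ n, ⋃ k, θ^[n + k] ⁻¹' B) = ⋂ n, ⋃ k, θ^[n + k] ⁻¹' B := by
      ext x
      simp only [Set.mem_preimage, Set.mem_iInter, Set.mem_iUnion]
      constructor
      · intro h n
        obtain ⟨k, hk⟩ := h n
        refine ⟨k + 1, ?_⟩
        rw [show n + (k + 1) = n + k + 1 from by ring, Function.iterate_succ_apply]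
        exact hk
      · intro h n
        obtain ⟨k, hk⟩ := h (n + 1)
        refine ⟨k, ?_⟩
        rw [← Function.iterate_succ_apply]
        rwa [show n + 1 + k = n + k + 1 from by ring] at hk
    have hsub : symmDiff (⋂ n, ⋃ k, θ^[n + k] ⁻¹' B) B ⊆ ⋃ k, symmDiff (θ^[k] ⁻¹' B) B := by
      intro x hx
      rcases Set.mem_symmDiff.1 hx with ⟨hxC, hxB⟩ | ⟨hxB, hxC⟩
      · have hx0 : x ∈ ⋃ k, θ^[0 + k] ⁻¹' B := Set.mem_iInter.1 hxC 0
        obtain ⟨k, hk⟩ := Set.mem_iUnion.1 hx0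
        rw [Set.mem_preimage, Nat.zero_add] at hk
        exact Set.mem_iUnion.2 ⟨k, Set.mem_symmDiff.2 (Or.inl ⟨hk, hxB⟩)⟩
      · simp only [Set.mem_iInter, Set.mem_iUnion, Set.mem_preimage, not_forall,
          not_exists] at hxC
        obtain ⟨n, hn⟩ := hxC
        have hnB : x ∉ θ^[n] ⁻¹' B := by
          intro hmem
          exact hn 0 (by rwa [Nat.add_zero])
        exact Set.mem_iUnion.2 ⟨n, Set.mem_symmDiff.2 (Or.inr ⟨hxB, hnB⟩)⟩
    have hCsd : V (symmDiff (⋂ n, ⋃ k, θ^[n + k] ⁻¹' B) B) = 0 := by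
      have hle := V_mono h𝒮 hP hV (measSD hCm hB) (MeasurableSet.iUnion hNm) hsub
      rw [hN0] at hle
      exact le_antisymm hle (V_nonneg h𝒮 hP hV (measSD hCm hB))
    obtain ⟨-, hC2⟩ := h1 (⋂ n, ⋃ k, θ^[n + k] ⁻¹' B) hCm hCinv
    rcases hC2 with hC0 | hCc0
    · left
      have hle := V_symmDiff_le h𝒮 hP hV hB hCm
      rw [hC0, symmDiff_comm B _, hCsd] at hle
      have hge := V_nonneg h𝒮 hP hV hB
      linarith
    · right
      have hle := V_symmDiff_le h𝒮 hP hV hB.compl hCm.compl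
      rw [compl_symmDiff_compl, symmDiff_comm B _, hCsd, hCc0] at hle
      have hge := V_nonneg h𝒮 hP hV hB.compl
      linarith
  have i23 : (∀ B : Set Ω, MeasurableSet B → V (symmDiff (θ ⁻¹' B) B) = 0 →
      (V B = 0 ∨ V Bᶜ = 0)) →
      ∀ A : Set Ω, MeasurableSet A → 0 < V A → V ((⋃ n : ℕ, θ^[n + 1] ⁻¹' A)ᶜ) = 0 := by
    intro h2 A hA hApos
    have hUm : MeasurableSet (⋃ n : ℕ, θ^[n + 1] ⁻¹' A) :=
      MeasurableSet.iUnion fun n => (hθ.iterate (n + 1)) hA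
    have hUsub : θ ⁻¹' (⋃ n : ℕ, θ^[n + 1] ⁻¹' A) ⊆ ⋃ n : ℕ, θ^[n + 1] ⁻¹' A := by
      intro x hx
      rw [Set.mem_preimage, Set.mem_iUnion] at hx
      obtain ⟨n, hn⟩ := hx
      rw [Set.mem_preimage] at hn
      refine Set.mem_iUnion.2 ⟨n + 1, ?_⟩
      rw [Set.mem_preimage, Function.iterate_succ_apply]
      exact hn
    have hEm : ∀ n : ℕ, MeasurableSet (θ^[n] ⁻¹' (⋃ n : ℕ, θ^[n + 1] ⁻¹' A)) :=
      fun n => (hθ.iterate n) hUm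
    have hanti : Antitone (fun n : ℕ => θ^[n] ⁻¹' (⋃ n : ℕ, θ^[n + 1] ⁻¹' A)) := by
      apply antitone_nat_of_succ_le
      intro n
      calc θ^[n + 1] ⁻¹' (⋃ n : ℕ, θ^[n + 1] ⁻¹' A)
          = θ^[n] ⁻¹' (θ ⁻¹' (⋃ n : ℕ, θ^[n + 1] ⁻¹' A)) := by
            rw [Function.iterate_succ', Set.preimage_comp]
        _ ⊆ θ^[n] ⁻¹' (⋃ n : ℕ, θ^[n + 1] ⁻¹' A) := Set.preimage_mono hUsub
    have hLm : MeasurableSet (⋂ n : ℕ, θ^[n] ⁻¹' (⋃ n : ℕ, θ^[n + 1] ⁻¹' A)) :=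
      MeasurableSet.iInter fun n => hEm n
    have hLinv : θ ⁻¹' (⋂ n : ℕ, θ^[n] ⁻¹' (⋃ n : ℕ, θ^[n + 1] ⁻¹' A)) =
        ⋂ n : ℕ, θ^[n] ⁻¹' (⋃ n : ℕ, θ^[n + 1] ⁻¹' A) := by
      apply Set.Subset.antisymm
      · intro x hx
        rw [Set.mem_preimage, Set.mem_iInter] at hx
        rw [Set.mem_iInter]
        intro n
        have h1 : x ∈ θ^[n + 1] ⁻¹' (⋃ n : ℕ, θ^[n + 1] ⁻¹' A) := by
          rw [Set.mem_preimage, Function.iterate_succ_apply]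
          exact Set.mem_preimage.1 (hx n)
        exact hanti (Nat.le_succ n) h1
      · intro x hx
        rw [Set.mem_iInter] at hx
        rw [Set.mem_preimage, Set.mem_iInter]
        intro n
        rw [Set.mem_preimage, ← Function.iterate_succ_apply]
        exact Set.mem_preimage.1 (hx (n + 1))
    have hVL : V (⋃ n : ℕ, θ^[n + 1] ⁻¹' A) =
        V (⋂ n : ℕ, θ^[n] ⁻¹' (⋃ n : ℕ, θ^[n + 1] ⁻¹' A)) := by
      have ht := hVa (fun n : ℕ => θ^[n] ⁻¹' (⋃ n : ℕ, θ^[n + 1] ⁻¹' A)) hEm hanti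
      simp only [V_iter hθ hpres hUm] at ht
      exact tendsto_nhds_unique tendsto_const_nhds ht
    have hUpos : 0 < V (⋃ n : ℕ, θ^[n + 1] ⁻¹' A) := by
      have h1 : θ^[0 + 1] ⁻¹' A ⊆ ⋃ n : ℕ, θ^[n + 1] ⁻¹' A :=
        Set.subset_iUnion (fun n : ℕ => θ^[n + 1] ⁻¹' A) 0
      have h2 := V_mono h𝒮 hP hV ((hθ.iterate (0 + 1)) hA) hUm h1
      rw [V_iter hθ hpres hA (0 + 1)] at h2
      linarith
    have hL2 := h2 (⋂ n : ℕ, θ^[n] ⁻¹' (⋃ n : ℕ, θ^[n + 1] ⁻¹' A)) hLm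
      (by rw [hLinv, symmDiff_self, Set.bot_eq_empty]; exact V_empty hP hV)
    rcases hL2 with hL0 | hLc0
    · rw [← hVL] at hL0
      exact absurd hL0 (ne_of_gt hUpos)
    · have hsubc : (⋃ n : ℕ, θ^[n + 1] ⁻¹' A)ᶜ ⊆
          (⋂ n : ℕ, θ^[n] ⁻¹' (⋃ n : ℕ, θ^[n + 1] ⁻¹' A))ᶜ := by
        apply Set.compl_subset_compl.2
        intro x hx
        have h1 := Set.mem_iInter.1 hx 0
        simpa using h1
      have hle := V_mono h𝒮 hP hV hUm.compl hLm.compl hsubc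
      have hge := V_nonneg h𝒮 hP hV hUm.compl
      rw [hLc0] at hle
      exact le_antisymm hle hge
  have i32 : (∀ A : Set Ω, MeasurableSet A → 0 < V A →
      V ((⋃ n : ℕ, θ^[n + 1] ⁻¹' A)ᶜ) = 0) →
      ∀ B : Set Ω, MeasurableSet B → V (symmDiff (θ ⁻¹' B) B) = 0 →
      (V B = 0 ∨ V Bᶜ = 0) := by
    intro h3 B hB h0
    by_cases hVB : V B = 0
    · exact Or.inl hVB
    right
    have hpos : 0 < V B := lt_of_le_of_ne (V_nonneg h𝒮 hP hV hB) (Ne.symm hVB)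
    have hU0 := h3 B hB hpos
    have hNm : ∀ k : ℕ, MeasurableSet (symmDiff (θ^[k] ⁻¹' B) B) :=
      fun k => measSD ((hθ.iterate k) hB) hB
    have hN0 : V (⋃ k, symmDiff (θ^[k] ⁻¹' B) B) = 0 :=
      V_iUnion_null h𝒮 hP hV hVb hNm (iter_symmDiff_null h𝒮 hP hV hθ hpres hB h0)
    have hsub : Bᶜ ⊆ (⋃ n : ℕ, θ^[n + 1] ⁻¹' B)ᶜ ∪ ⋃ k, symmDiff (θ^[k] ⁻¹' B) B := by
      intro x hx
      by_cases hxU : x ∈ ⋃ n : ℕ, θ^[n + 1] ⁻¹' B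
      · obtain ⟨n, hn⟩ := Set.mem_iUnion.1 hxU
        exact Or.inr (Set.mem_iUnion.2 ⟨n + 1, Set.mem_symmDiff.2 (Or.inl ⟨hn, hx⟩)⟩)
      · exact Or.inl hxU
    have hUm : MeasurableSet ((⋃ n : ℕ, θ^[n + 1] ⁻¹' B)ᶜ) :=
      (MeasurableSet.iUnion fun n => (hθ.iterate (n + 1)) hB).compl
    have hNmU : MeasurableSet (⋃ k, symmDiff (θ^[k] ⁻¹' B) B) := MeasurableSet.iUnion hNm
    have h1 := V_mono h𝒮 hP hV hB.compl (hUm.union hNmU) hsub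
    have h2 := V_union_le h𝒮 hP hV hUm hNmU
    have hge := V_nonneg h𝒮 hP hV hB.compl
    rw [hU0, hN0] at h2
    exact le_antisymm (by linarith) hge
  have i34 : (∀ A : Set Ω, MeasurableSet A → 0 < V A →
      V ((⋃ n : ℕ, θ^[n + 1] ⁻¹' A)ᶜ) = 0) →
      ∀ A B : Set Ω, MeasurableSet A → MeasurableSet B → 0 < V A → 0 < V B →
      ∃ n : ℕ, 0 < V (θ^[n + 1] ⁻¹' A ∩ B) := by
    intro h3 A B hA hB hApos hBpos
    have hU0 := h3 A hA hApos
    by_contra hcon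
    push_neg at hcon
    have hS0 : ∀ n : ℕ, V (θ^[n + 1] ⁻¹' A ∩ B) = 0 := fun n =>
      le_antisymm (hcon n) (V_nonneg h𝒮 hP hV (((hθ.iterate (n + 1)) hA).inter hB))
    have hUB0 : V (⋃ n : ℕ, θ^[n + 1] ⁻¹' A ∩ B) = 0 :=
      V_iUnion_null h𝒮 hP hV hVb (fun n => ((hθ.iterate (n + 1)) hA).inter hB) hS0
    have hsub : B ⊆ (⋃ n : ℕ, θ^[n + 1] ⁻¹' A ∩ B) ∪ (⋃ n : ℕ, θ^[n + 1] ⁻¹' A)ᶜ := by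
      intro x hx
      by_cases hxU : x ∈ ⋃ n : ℕ, θ^[n + 1] ⁻¹' A
      · obtain ⟨n, hn⟩ := Set.mem_iUnion.1 hxU
        exact Or.inl (Set.mem_iUnion.2 ⟨n, ⟨hn, hx⟩⟩)
      · exact Or.inr hxU
    have hm1 : MeasurableSet (⋃ n : ℕ, θ^[n + 1] ⁻¹' A ∩ B) :=
      MeasurableSet.iUnion fun n => ((hθ.iterate (n + 1)) hA).inter hB
    have hm2 : MeasurableSet ((⋃ n : ℕ, θ^[n + 1] ⁻¹' A)ᶜ) :=
      (MeasurableSet.iUnion fun n => (hθ.iterate (n + 1)) hA).compl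
    have h1 := V_mono h𝒮 hP hV hB (hm1.union hm2) hsub
    have h2 := V_union_le h𝒮 hP hV hm1 hm2
    rw [hUB0, hU0] at h2
    linarith
  have i43 : (∀ A B : Set Ω, MeasurableSet A → MeasurableSet B → 0 < V A → 0 < V B →
      ∃ n : ℕ, 0 < V (θ^[n + 1] ⁻¹' A ∩ B)) →
      ∀ A : Set Ω, MeasurableSet A → 0 < V A → V ((⋃ n : ℕ, θ^[n + 1] ⁻¹' A)ᶜ) = 0 := by
    intro h4 A hA hApos
    by_contra hne
    have hUm : MeasurableSet ((⋃ n : ℕ, θ^[n + 1] ⁻¹' A)ᶜ) :=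
      (MeasurableSet.iUnion fun n => (hθ.iterate (n + 1)) hA).compl
    have hpos : 0 < V ((⋃ n : ℕ, θ^[n + 1] ⁻¹' A)ᶜ) :=
      lt_of_le_of_ne (V_nonneg h𝒮 hP hV hUm) (Ne.symm hne)
    obtain ⟨n, hn⟩ := h4 A ((⋃ n : ℕ, θ^[n + 1] ⁻¹' A)ᶜ) hA hUm hApos hpos
    have hempty : θ^[n + 1] ⁻¹' A ∩ (⋃ m : ℕ, θ^[m + 1] ⁻¹' A)ᶜ = ∅ := by
      apply Set.eq_empty_iff_forall_notMem.2
      rintro x ⟨hx1, hx2⟩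
      exact hx2 (Set.mem_iUnion.2 ⟨n, hx1⟩)
    rw [hempty, V_empty hP hV] at hn
    exact lt_irrefl 0 hn
  exact ⟨⟨i12, i21⟩, ⟨i23, i32⟩, ⟨i34, i43⟩⟩
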